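/- Let L = {a·(1,0) + b·(1/2, √3/2) : a, b ∈ ℤ} be the triangular lattice, let c ∈ ℝ², and let f be the rotation by 60° about c, f(x) = c + R(x − c) where R is the rotation by 60° about the origin. Then f maps L onto L if and only if c ∈ L; i.e., the possible centers of 60°-rotational symmetries of the triangular tessellation are exactly the lattice points. -/
import Mathlib


/-- The triangular lattice `L = {a·(1,0) + b·(1/2,√3/2) : a, b ∈ ℤ}` (as `Fin 2 → ℝ`). -/
noncomputable def triLat : Set (Fin 2 → ℝ) :=
  {x | ∃ a b : ℤ, x = (a : ℝ) • ![1, 0] + (b : ℝ) • ![1/2, Real.sqrt 3 / 2]}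

/-- The linear rotation of `ℝ²` by 60° about the origin. -/
noncomputable def rot60 : Matrix (Fin 2) (Fin 2) ℝ :=
  !![1/2, -(Real.sqrt 3 / 2); Real.sqrt 3 / 2, 1/2]

/-- Auxiliary: the lattice point with coordinates `a, b`. -/
noncomputable def E (a b : ℤ) : Fin 2 → ℝ :=
  (a : ℝ) • ![1, 0] + (b : ℝ) • ![1/2, Real.sqrt 3 / 2]

lemma h3 : Real.sqrt 3 * Real.sqrt 3 = 3 := Real.mul_self_sqrt (by norm_num)

lemma E_mem (a b : ℤ) : E a b ∈ triLat := ⟨a, b, rfl⟩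

lemma mem_iff {x : Fin 2 → ℝ} : x ∈ triLat ↔ ∃ a b : ℤ, x = E a b := Iff.rfl

lemma E_zero : E 0 0 = 0 := by
  funext i; fin_cases i <;> simp [E]

lemma E_add (a b p q : ℤ) : E a b + E p q = E (a + p) (b + q) := by
  funext i
  fin_cases i <;> simp [E] <;> ring

lemma E_sub (a b p q : ℤ) : E a b - E p q = E (a - p) (b - q) := by
  funext i
  fin_cases i <;> simp [E] <;> ring

lemma rot_E (a b : ℤ) : rot60.mulVec (E a b) = E (-b) (a + b) := by
  funext i
  fin_cases i <;>
    simp [rot60, E, Matrix.mulVec, dotProduct, Fin.sum_univ_two]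
  · linear_combination (-(b:ℝ)/4) * h3
  · ring

lemma rot_fix (c : Fin 2 → ℝ) : rot60.mulVec (c - rot60.mulVec c) = c := by
  funext i
  fin_cases i <;>
    simp [rot60, Matrix.mulVec, dotProduct, Fin.sum_univ_two]
  · linear_combination (c 0 / 4) * h3
  · linear_combination (c 1 / 4) * h3

/-- The rotation by 60° about `c`, `f(x) = c + R(x − c)`, maps the
triangular lattice onto itself iff `c ∈ L`: the possible centers of 60°-rotational
symmetries of the triangular tessellation are exactly the lattice points. -/
theorem rotation60_center_triLat (c : Fin 2 → ℝ) :
    (fun x => c + rot60.mulVec (x - c)) '' triLat = triLat ↔ c ∈ triLat := by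
  constructor
  · intro h
    have h0 : c + rot60.mulVec (E 0 0 - c) ∈ triLat := by
      rw [← h]; exact Set.mem_image_of_mem _ (E_mem 0 0)
    rw [E_zero, zero_sub, Matrix.mulVec_neg] at h0
    obtain ⟨a, b, hab⟩ := h0
    have hc : c - rot60.mulVec c = E a b := by
      rw [sub_eq_add_neg]; exact hab
    have hce : c = E (-b) (a + b) := by
      rw [← rot_fix c, hc, rot_E]
    rw [mem_iff]
    exact ⟨_, _, hce⟩
  · rintro ⟨p, q, hc⟩
    have hc' : c = E p q := hc
    ext y
    constructor
    · rintro ⟨x, ⟨u, v, hx⟩, rfl⟩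
      have hx' : x = E u v := hx
      simp only
      rw [hx', hc', E_sub, rot_E, E_add]
      exact E_mem _ _
    · rintro ⟨a, b, hy⟩
      have hy' : y = E a b := hy
      refine ⟨E (a + b - q) (p + q - a), E_mem _ _, ?_⟩
      simp only
      rw [hc', E_sub, rot_E, E_add, hy']
      congr 1 <;> ring
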